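/- Let g > 0, h_ℓ > 0, v_ℓ ∈ ℝ, and define Φ_ℓ : (0,∞) → ℝ by Φ_ℓ(h) = v_ℓ − 2(√(gh) − √(gh_ℓ)) for h ≤ h_ℓ and Φ_ℓ(h) = v_ℓ − (h − h_ℓ)·√(g(h + h_ℓ)/(2·h·h_ℓ)) for h > h_ℓ. Similarly, for h_r > 0, v_r ∈ ℝ, define Φ_r : (0,∞) → ℝ by Φ_r(h) = v_r + 2(√(gh) − √(gh_r)) for h ≤ h_r and Φ_r(h) = v_r + (h − h_r)·√(g(h + h_r)/(2·h·h_r)) for h > h_r. Then Φ_ℓ is continuous, strictly decreasing on (0,∞), tends to v_ℓ + 2√(gh_ℓ) as h → 0⁺ and to −∞ as h → ∞; and Φ_r is continuous, strictly increasing on (0,∞), tends to v_r − 2√(gh_r) as h → 0⁺ and to +∞ as h → ∞. -/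

import Mathlib

open Filter Topology Set

lemma sw_key (g h0 : ℝ) (hg : 0 < g) (hh0 : 0 < h0) (F : ℝ → ℝ)
    (hF1 : ∀ h : ℝ, 0 < h → h ≤ h0 →
      F h = 2 * (Real.sqrt (g * h) - Real.sqrt (g * h0)))
    (hF2 : ∀ h : ℝ, h0 < h →
      F h = (h - h0) * Real.sqrt (g * (h + h0) / (2 * h * h0))) :
    ContinuousOn F (Ioi 0) ∧ StrictMonoOn F (Ioi 0) ∧
    Tendsto F (nhdsWithin 0 (Ioi 0)) (nhds (-(2 * Real.sqrt (g * h0)))) ∧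
    Tendsto F atTop atTop := by
  set p1 : ℝ → ℝ := fun h => 2 * (Real.sqrt (g * h) - Real.sqrt (g * h0)) with hp1def
  set p2 : ℝ → ℝ := fun h => (h - h0) * Real.sqrt (g * (h + h0) / (2 * h * h0)) with hp2def
  have hp1c : Continuous p1 := by
    apply Continuous.mul continuous_const
    exact ((Real.continuous_sqrt.comp (continuous_const.mul continuous_id)).sub continuous_const)
  have hp2c : ContinuousOn p2 (Ici h0) := by
    apply (continuousOn_id.sub continuousOn_const).mul
    apply ContinuousOn.sqrt
    apply ContinuousOn.div
    · fun_prop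
    · fun_prop
    · intro x hx
      have hx0 : 0 < x := lt_of_lt_of_le hh0 hx
      positivity
  -- sqrt form of p2 for h ≥ h0
  have hp2sq : ∀ h : ℝ, h0 ≤ h → p2 h = Real.sqrt (g * (h - h0)^2 * (h + h0) / (2 * h * h0)) := by
    intro h hh
    have h1 : (0:ℝ) ≤ h - h0 := by linarith
    rw [hp2def]
    simp only
    rw [show g * (h - h0)^2 * (h + h0) / (2 * h * h0) = (h - h0)^2 * (g * (h + h0) / (2 * h * h0)) by ring,
      Real.sqrt_mul (sq_nonneg _), Real.sqrt_sq h1]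
  have hF0 : F h0 = 0 := by
    rw [hF1 h0 hh0 le_rfl]; simp
  have hp2at : p2 h0 = 0 := by simp [hp2def]
  have hp1at : p1 h0 = 0 := by simp [hp1def]
  -- strict mono of p2 on Ici h0
  have hmono2 : ∀ x y : ℝ, h0 ≤ x → x < y → p2 x < p2 y := by
    intro x y hx hxy
    have hx0 : 0 < x := lt_of_lt_of_le hh0 hx
    have hy0 : 0 < y := hx0.trans hxy
    rw [hp2sq x hx, hp2sq y (hx.trans hxy.le)]
    apply Real.sqrt_lt_sqrt (by positivity)
    rw [div_lt_div_iff₀ (by positivity) (by positivity)]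
    have hxy2 : h0^2 < x * y := by nlinarith
    have hkey : (0:ℝ) < x*y*(x+y) - h0*x*y - h0^3 := by
      nlinarith [mul_pos (mul_pos hx0 hy0) (show (0:ℝ) < x + y - 2*h0 by linarith),
        mul_pos hh0 (sub_pos.2 hxy2)]
    nlinarith [mul_pos (sub_pos.2 hxy) hkey,
      mul_pos hg hh0, mul_pos (mul_pos hg hh0) (sub_pos.2 hxy)]
  have hmono : StrictMonoOn F (Ioi 0) := by
    intro x hx y hy hxy
    simp only [mem_Ioi] at hx hy
    rcases le_or_gt y h0 with hyl | hyl
    · rw [hF1 x hx (hxy.le.trans hyl), hF1 y hy hyl]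
      have : Real.sqrt (g * x) < Real.sqrt (g * y) :=
        Real.sqrt_lt_sqrt (by positivity) (by nlinarith)
      linarith
    · rcases le_or_gt x h0 with hxl | hxl
      · have h1 : F x ≤ 0 := by
          rw [hF1 x hx hxl]
          have : Real.sqrt (g * x) ≤ Real.sqrt (g * h0) :=
            Real.sqrt_le_sqrt (by nlinarith)
          linarith
        have h2 : 0 < F y := by
          rw [hF2 y hyl]
          have : 0 < Real.sqrt (g * (y + h0) / (2 * y * h0)) := by
            apply Real.sqrt_pos.2; have hy0 : 0 < y := hy; positivity
          nlinarith
        linarith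
      · rw [hF2 x hxl, hF2 y (hxl.trans hxy)]
        exact hmono2 x y hxl.le hxy
  refine ⟨?_, hmono, ?_, ?_⟩
  · -- continuity
    intro x hx
    simp only [mem_Ioi] at hx
    rcases lt_trichotomy x h0 with hxl | hxl | hxl
    · apply ContinuousAt.continuousWithinAt
      apply hp1c.continuousAt.congr
      filter_upwards [Ioo_mem_nhds hx hxl] with y hy
      exact (hF1 y hy.1 hy.2.le).symm
    · subst hxl
      have h1 : ContinuousWithinAt F (Ioc 0 x) x := by
        apply hp1c.continuousWithinAt.congr
        · intro y hy; exact hF1 y hy.1 hy.2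
        · rw [hF0, hp1at]
      have h2 : ContinuousWithinAt F (Ioi x) x := by
        apply ((hp2c x self_mem_Ici).mono Ioi_subset_Ici_self).congr
        · intro y hy; exact hF2 y hy
        · rw [hF0, hp2at]
      apply (h1.union h2).mono
      intro y hy
      simp only [mem_Ioi] at hy
      rcases le_or_gt y x with h | h
      · exact Or.inl ⟨hy, h⟩
      · exact Or.inr h
    · apply ContinuousAt.continuousWithinAt
      apply ((hp2c.mono Ioi_subset_Ici_self).continuousAt (Ioi_mem_nhds hxl)).congr
      filter_upwards [Ioi_mem_nhds hxl] with y hy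
      exact (hF2 y hy).symm
  · -- limit at 0+
    have hev : F =ᶠ[nhdsWithin 0 (Ioi 0)] p1 := by
      filter_upwards [Ioc_mem_nhdsGT_of_mem (Set.left_mem_Ico.2 hh0)] with y hy
      exact hF1 y hy.1 hy.2
    have ht : Tendsto p1 (nhds 0) (nhds (-(2 * Real.sqrt (g * h0)))) := by
      have := hp1c.tendsto 0
      simpa [hp1def, mul_zero] using this
    exact (ht.mono_left nhdsWithin_le_nhds).congr' hev.symm
  · -- limit at infinity
    set c := Real.sqrt (g / (2 * h0)) with hcdef
    have hc : 0 < c := Real.sqrt_pos.2 (by positivity)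
    apply tendsto_atTop_mono' atTop (show ∀ᶠ h in atTop, (h - h0) * c ≤ F h from ?_)
    · exact (tendsto_atTop_add_const_right atTop (-h0) tendsto_id).atTop_mul_const hc
    · filter_upwards [eventually_gt_atTop h0] with h hh
      rw [hF2 h hh]
      have hh0' : 0 < h := hh0.trans hh
      apply mul_le_mul_of_nonneg_left _ (by linarith)
      rw [hcdef]
      apply Real.sqrt_le_sqrt
      rw [div_le_div_iff₀ (by positivity) (by positivity)]
      nlinarith [mul_pos (mul_pos hg hh0) hh0]

/-- Monotonicity, continuity and asymptotic behavior of the shallow water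
wave-curve functions `Φ_ℓ` (strictly decreasing, from `v_ℓ + 2√(gh_ℓ)` at `0⁺`
down to `−∞`) and `Φ_r` (strictly increasing, from `v_r − 2√(gh_r)` at `0⁺`
up to `+∞`). -/
theorem shallow_water_wave_curves_monotone
    (g hl hr vl vr : ℝ) (hg : 0 < g) (hhl : 0 < hl) (hhr : 0 < hr)
    (Φl Φr : ℝ → ℝ)
    (hΦl₁ : ∀ h : ℝ, 0 < h → h ≤ hl →
      Φl h = vl - 2 * (Real.sqrt (g * h) - Real.sqrt (g * hl)))
    (hΦl₂ : ∀ h : ℝ, hl < h →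
      Φl h = vl - (h - hl) * Real.sqrt (g * (h + hl) / (2 * h * hl)))
    (hΦr₁ : ∀ h : ℝ, 0 < h → h ≤ hr →
      Φr h = vr + 2 * (Real.sqrt (g * h) - Real.sqrt (g * hr)))
    (hΦr₂ : ∀ h : ℝ, hr < h →
      Φr h = vr + (h - hr) * Real.sqrt (g * (h + hr) / (2 * h * hr))) :
    ContinuousOn Φl (Ioi 0) ∧ StrictAntiOn Φl (Ioi 0) ∧
    Tendsto Φl (nhdsWithin 0 (Ioi 0)) (nhds (vl + 2 * Real.sqrt (g * hl))) ∧
    Tendsto Φl atTop atBot ∧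
    ContinuousOn Φr (Ioi 0) ∧ StrictMonoOn Φr (Ioi 0) ∧
    Tendsto Φr (nhdsWithin 0 (Ioi 0)) (nhds (vr - 2 * Real.sqrt (g * hr))) ∧
    Tendsto Φr atTop atTop := by
  obtain ⟨lc, lm, l0, li⟩ := sw_key g hl hg hhl (fun h => vl - Φl h)
    (fun h h1 h2 => by rw [hΦl₁ h h1 h2]; ring)
    (fun h h1 => by rw [hΦl₂ h h1]; ring)
  obtain ⟨rc, rm, r0, ri⟩ := sw_key g hr hg hhr (fun h => Φr h - vr)
    (fun h h1 h2 => by rw [hΦr₁ h h1 h2]; ring)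
    (fun h h1 => by rw [hΦr₂ h h1]; ring)
  refine ⟨?_, ?_, ?_, ?_, ?_, ?_, ?_, ?_⟩
  · have : ContinuousOn (fun h => vl - (vl - Φl h)) (Ioi 0) := continuousOn_const.sub lc
    simpa using this
  · intro x hx y hy hxy
    have := lm hx hy hxy
    simp only at this; linarith
  · have := (tendsto_const_nhds (x := vl) (f := nhdsWithin (0:ℝ) (Ioi 0))).sub l0
    simp only [sub_neg_eq_add] at this
    have heq : (fun h => vl - (vl - Φl h)) = Φl := by funext h; ring
    rwa [heq] at this
  · have h1 : Tendsto (fun h => -(vl - Φl h)) atTop atBot := tendsto_neg_atBot_iff.mpr li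
    have h2 := tendsto_atBot_add_const_left atTop vl h1
    have heq : (fun h => vl + -(vl - Φl h)) = Φl := by funext h; ring
    rwa [heq] at h2
  · have : ContinuousOn (fun h => (Φr h - vr) + vr) (Ioi 0) := rc.add continuousOn_const
    simpa using this
  · intro x hx y hy hxy
    have := rm hx hy hxy
    simp only at this; linarith
  · have := r0.add (tendsto_const_nhds (x := vr) (f := nhdsWithin (0:ℝ) (Ioi 0)))
    have heq : (fun h => (Φr h - vr) + vr) = Φr := by funext h; ring
    rw [heq] at this
    convert this using 2
    ring
  · have := tendsto_atTop_add_const_right atTop vr ri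
    have heq : (fun h => (Φr h - vr) + vr) = Φr := by funext h; ring
    rwa [heq] at this
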